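/- If the dictionary D has unit-norm columns spanning ℝ^m, then the Matching Pursuit reconstruction x̂^(t) = x - r^(t) converges to x as t → ∞. -/

import Mathlib

open RealInnerProductSpace

/-- If the unit-norm columns of the dictionary span `ℝ^m`, the Matching
Pursuit reconstructions `x̂^(t) = x - r^(t)` converge to the input `x`. -/
theorem mp_reconstruction_converges {m p : ℕ}
    (D : Fin p → EuclideanSpace ℝ (Fin m))
    (hD : ∀ i, ‖D i‖ = 1)
    (hspan : Submodule.span ℝ (Set.range D) = ⊤)
    (x : EuclideanSpace ℝ (Fin m))
    (r : ℕ → EuclideanSpace ℝ (Fin m)) (hr0 : r 0 = x)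
    (j : ℕ → Fin p)
    (hj : ∀ t i, |⟪D i, r t⟫| ≤ |⟪D (j t), r t⟫|)
    (hr : ∀ t, r (t + 1) = r t - ⟪D (j t), r t⟫ • D (j t)) :
    Filter.Tendsto (fun t => x - r t) Filter.atTop (nhds x) := by
  set c : ℕ → ℝ := fun t => ⟪D (j t), r t⟫ with hc
  set f : ℕ → ℝ := fun t => ‖r t‖ ^ 2 with hf
  -- step identity
  have hstep : ∀ t, f (t + 1) = f t - c t ^ 2 := by
    intro t
    have : ‖r (t+1)‖ ^ 2 = ‖r t‖^2 - 2 * ⟪r t, c t • D (j t)⟫ + ‖c t • D (j t)‖^2 := by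
      rw [hr t]; exact norm_sub_sq_real _ _
    have h1 : ⟪r t, c t • D (j t)⟫ = c t * c t := by
      rw [real_inner_smul_right, real_inner_comm]
    have h2 : ‖c t • D (j t)‖ ^ 2 = c t ^ 2 := by
      rw [norm_smul, mul_pow, hD, one_pow, mul_one]
      simp [sq_abs]
    simp only [hf, this, h1, h2]; ring
  have hfnonneg : ∀ t, 0 ≤ f t := fun t => sq_nonneg _
  have hanti : Antitone f := by
    apply antitone_nat_of_succ_le
    intro t; rw [hstep t]; nlinarith [sq_nonneg (c t)]
  have hbdd : BddBelow (Set.range f) := ⟨0, by rintro _ ⟨t, rfl⟩; exact hfnonneg t⟩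
  have hfconv : Filter.Tendsto f Filter.atTop (nhds (⨅ t, f t)) :=
    tendsto_atTop_ciInf hanti hbdd
  have hfsucc : Filter.Tendsto (fun t => f (t + 1)) Filter.atTop (nhds (⨅ t, f t)) :=
    hfconv.comp (Filter.tendsto_add_atTop_nat 1)
  have hcsq : Filter.Tendsto (fun t => c t ^ 2) Filter.atTop (nhds 0) := by
    have := hfconv.sub hfsucc
    simp only [sub_self] at this
    convert this using 2 with t
    rw [hstep t]; ring
  have hc0 : Filter.Tendsto c Filter.atTop (nhds 0) := by
    rw [tendsto_zero_iff_abs_tendsto_zero]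
    have : Filter.Tendsto (fun t => Real.sqrt (c t ^ 2)) Filter.atTop (nhds 0) := by
      have := (Real.continuous_sqrt.tendsto 0).comp hcsq
      simpa [Function.comp_def] using this
    simpa [Real.sqrt_sq_eq_abs, Function.comp_def] using this
  -- each inner product tends to 0
  have hinner : ∀ i, Filter.Tendsto (fun t => ⟪D i, r t⟫) Filter.atTop (nhds 0) := by
    intro i
    apply squeeze_zero_norm (fun t => by simpa [Real.norm_eq_abs] using hj t i)
    simpa [Real.norm_eq_abs] using hc0.abs
  -- the linear map y ↦ (⟪D i, y⟫)
  let T : EuclideanSpace ℝ (Fin m) →ₗ[ℝ] EuclideanSpace ℝ (Fin p) :=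
    { toFun := fun y => WithLp.toLp 2 (fun i => ⟪D i, y⟫)
      map_add' := by intro a b; ext i; simp [inner_add_right]
      map_smul' := by intro s a; ext i; simp [inner_smul_right] }
  have hTinj : LinearMap.ker T = ⊥ := by
    rw [LinearMap.ker_eq_bot']
    intro y hy
    have hyi : ∀ i, ⟪D i, y⟫ = 0 := fun i => by simpa [T] using congrArg (fun v : EuclideanSpace ℝ (Fin p) => v i) hy
    have hymem : y ∈ Submodule.span ℝ (Set.range D) := by rw [hspan]; trivial
    obtain ⟨w, hw⟩ := (Finsupp.mem_span_range_iff_exists_finsupp).mp hymem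
    have : ⟪y, y⟫ = 0 := by
      nth_rewrite 1 [← hw]
      rw [Finsupp.sum, sum_inner]
      refine Finset.sum_eq_zero fun i _ => ?_
      rw [real_inner_smul_left, hyi, mul_zero]
    exact inner_self_eq_zero.mp this
  obtain ⟨K, hK0, hK⟩ := T.exists_antilipschitzWith hTinj
  -- T (r t) → 0
  have hTr : Filter.Tendsto (fun t => T (r t)) Filter.atTop (nhds 0) := by
    have : Filter.Tendsto (fun t => (fun i => ⟪D i, r t⟫ : Fin p → ℝ)) Filter.atTop
        (nhds 0) := by
      rw [tendsto_pi_nhds]; intro i; simpa using hinner i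
    have he := (PiLp.continuousLinearEquiv 2 ℝ (fun _ : Fin p => ℝ)).symm.continuous.tendsto 0
    have := he.comp this
    simpa [T, Function.comp_def] using this
  have hr0' : Filter.Tendsto r Filter.atTop (nhds 0) := by
    rw [tendsto_zero_iff_norm_tendsto_zero]
    have hb : ∀ t, ‖r t‖ ≤ (K : ℝ) * ‖T (r t)‖ := fun t => by
      simpa [dist_eq_norm, map_zero] using hK.le_mul_dist (r t) 0
    have h0 : Filter.Tendsto (fun t => (K : ℝ) * ‖T (r t)‖) Filter.atTop (nhds 0) := by
      simpa using hTr.norm.const_mul (K : ℝ)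
    exact squeeze_zero (fun t => norm_nonneg _) hb h0
  have := (tendsto_const_nhds (x := x)).sub hr0'
  simpa using this
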